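/- Let N be any model of T₀ and a a rational number. Suppose x is an element of N realizing the type a⁺ or the type a⁻. Then for every element y of N: E(x, y) holds (i.e., for all rationals c < d, N ⊨ (P_c(x) → P_d(y)) ∧ (P_c(y) → P_d(x))) if and only if y realizes a⁺ or y realizes a⁻. That is, in every model of T₀ the set of realizations of a⁺ together with the set of realizations of a⁻ forms exactly one E-class. -/

import Mathlib

open FirstOrder FirstOrder.Language

universe u

/-- The language `L_ℚ` with a unary relation symbol `P_a` for each rational `a` and no other
symbols. -/
def LQ : FirstOrder.Language :=
  ⟨fun _ => Empty, fun n => match n with | 1 => ℚ | _ => Empty⟩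

/-- The `L_ℚ`-structure on `ℚ` in which `P_a` is interpreted as `{x : ℚ | x ≤ a}`. -/
instance : LQ.Structure ℚ where
  funMap {_} f _ := Empty.elim f
  RelMap {n} := fun r x =>
    match n, r, x with
    | 1, a, x => x 0 ≤ a

/-- `T₀` is the complete `L_ℚ`-theory of the structure `ℚ`. -/
def T0 : LQ.Theory := LQ.completeTheory ℚ

/-- The formula `P_a(xᵢ)` in the two free variables `x₀, x₁`. -/
def pFml (a : ℚ) (i : Fin 2) : LQ.Formula (Fin 2) :=
  Relations.formula₁ (show LQ.Relations 1 from a) (Term.var i)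

/-- For rationals `a < b`, the formula `(P_a(x) → P_b(y)) ∧ (P_a(y) → P_b(x))`; the conjunction
of all these formulas defines the equivalence relation `E` of the Pillay–Poizat example. -/
def eFml (a b : ℚ) : LQ.Formula (Fin 2) :=
  (pFml a 0 ⟹ pFml b 1) ⊓ (pFml a 1 ⟹ pFml b 0)


/-- `x` realizes the type `a⁺` in a model `N` of `T₀`: `P_b(x)` holds for every rational `b > a`
and fails for every rational `b ≤ a`. -/
def RealizesPlus {N : Type u} [LQ.Structure N] (a : ℚ) (x : N) : Prop :=
  (∀ b : ℚ, a < b → Structure.RelMap (show LQ.Relations 1 from b) ![x]) ∧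
  (∀ b : ℚ, b ≤ a → ¬Structure.RelMap (show LQ.Relations 1 from b) ![x])

/-- `x` realizes the type `a⁻` in a model `N` of `T₀`: `P_b(x)` holds for every rational `b ≥ a`
and fails for every rational `b < a`. -/
def RealizesMinus {N : Type u} [LQ.Structure N] (a : ℚ) (x : N) : Prop :=
  (∀ b : ℚ, a ≤ b → Structure.RelMap (show LQ.Relations 1 from b) ![x]) ∧
  (∀ b : ℚ, b < a → ¬Structure.RelMap (show LQ.Relations 1 from b) ![x])


lemma eFml_realize_iff {N : Type u} [LQ.Structure N] (c d : ℚ) (x y : N) :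
    (eFml c d).Realize ![x, y] ↔
      ((Structure.RelMap (show LQ.Relations 1 from c) ![x] →
          Structure.RelMap (show LQ.Relations 1 from d) ![y]) ∧
       (Structure.RelMap (show LQ.Relations 1 from c) ![y] →
          Structure.RelMap (show LQ.Relations 1 from d) ![x])) := by
  simp only [eFml, pFml, Formula.realize_inf, Formula.realize_imp]
  erw [Formula.realize_rel₁, Formula.realize_rel₁, Formula.realize_rel₁, Formula.realize_rel₁]
  simp

/-- In any model `N` of `T₀`, if `x` realizes `a⁺` or `a⁻`, then for any `y`,
`E(x, y)` holds iff `y` realizes `a⁺` or `a⁻`: the realizations of `a⁺` together with those of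
`a⁻` form exactly one `E`-class. -/
theorem eClass_of_realizesPlus_or_realizesMinus
    (N : Type u) [LQ.Structure N] [Nonempty N] (hN : N ⊨ T0) (a : ℚ) (x : N)
    (hx : RealizesPlus a x ∨ RealizesMinus a x) :
    ∀ y : N,
      (∀ c d : ℚ, c < d → (eFml c d).Realize ![x, y]) ↔
        (RealizesPlus a y ∨ RealizesMinus a y) := by
  intro y
  set p : ℚ → N → Prop := fun b z => Structure.RelMap (show LQ.Relations 1 from b) ![z] with hp
  constructor
  · intro hE
    have h1 : ∀ d : ℚ, a < d → p d y := by
      intro d hd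
      obtain ⟨c, hc1, hc2⟩ := exists_between hd
      have := ((eFml_realize_iff c d x y).1 (hE c d hc2)).1
      rcases hx with ⟨hxp, _⟩ | ⟨hxm, _⟩
      · exact this (hxp c hc1)
      · exact this (hxm c hc1.le)
    have h2 : ∀ c : ℚ, c < a → ¬ p c y := by
      intro c hc hcy
      obtain ⟨d, hd1, hd2⟩ := exists_between hc
      have := ((eFml_realize_iff c d x y).1 (hE c d hd1)).2 hcy
      rcases hx with ⟨_, hxp⟩ | ⟨_, hxm⟩
      · exact hxp d hd2.le this
      · exact hxm d hd2 this
    by_cases hpa : p a y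
    · right
      refine ⟨fun b hb => ?_, h2⟩
      rcases eq_or_lt_of_le hb with rfl | hb'
      · exact hpa
      · exact h1 b hb'
    · left
      refine ⟨h1, fun b hb => ?_⟩
      rcases eq_or_lt_of_le hb with rfl | hb'
      · exact hpa
      · exact h2 b hb'
  · intro hy c d hcd
    have key : ∀ u v : N, (RealizesPlus a u ∨ RealizesMinus a u) →
        (RealizesPlus a v ∨ RealizesMinus a v) → p c u → p d v := by
      intro u v hu hv hcu
      have hca : a ≤ c := by
        by_contra h
        push_neg at h
        rcases hu with ⟨_, hu2⟩ | ⟨_, hu2⟩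
        · exact hu2 c h.le hcu
        · exact hu2 c h hcu
      have had : a < d := lt_of_le_of_lt hca hcd
      rcases hv with ⟨hv1, _⟩ | ⟨hv1, _⟩
      · exact hv1 d had
      · exact hv1 d had.le
    exact (eFml_realize_iff c d x y).2 ⟨key x y hx hy, key y x hy hx⟩
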